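/- Let G be an abelian residually finite group and Ḡ its odometer. The map ψ : C(Ḡ, G) → Ḡ given by ψ(φ) = φ(e) is a group isomorphism from the centralizer of the odometer action onto Ḡ. In particular, the centralizer C(Ḡ, G) is abelian. -/

import Mathlib

variable {G : Type*} [CommGroup G]

instance quotBotTop (H : Subgroup G) : TopologicalSpace (G ⧸ H) := ⊥

/-- The inverse limit of the quotients `G ⧸ N n`, realized as the subgroup of the
product `∀ n, G ⧸ N n` consisting of compatible sequences. -/
def odometerSubgroup (N : ℕ → Subgroup G) [∀ n, (N n).Normal]
    (hle : ∀ n, N (n + 1) ≤ N n) : Subgroup (∀ n, G ⧸ N n) where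
  carrier := {x | ∀ n, QuotientGroup.map (N (n + 1)) (N n) (MonoidHom.id G)
      (fun g hg => hle n hg) (x (n + 1)) = x n}
  mul_mem' := by
    intro a b ha hb n
    rw [Pi.mul_apply, Pi.mul_apply, map_mul, ha n, hb n]
  one_mem' := by
    intro n
    rw [Pi.one_apply, Pi.one_apply, map_one]
  inv_mem' := by
    intro a ha n
    rw [Pi.inv_apply, Pi.inv_apply, map_inv, ha n]

/-- The natural map `G → Ḡ`, `g ↦ (g G₁, g G₂, …)`. -/
def odIncl (N : ℕ → Subgroup G) [∀ n, (N n).Normal] (hle : ∀ n, N (n + 1) ≤ N n)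
    (g : G) : odometerSubgroup N hle :=
  ⟨fun _ => QuotientGroup.mk g, fun n => by first | rfl | exact QuotientGroup.map_mk _ _ _ _ g | simp [QuotientGroup.map_mk]; rfl⟩


/-- The centralizer of the odometer action: all homeomorphisms of `Ḡ` commuting with
the left-translation action of `G`. -/
def odometerCentralizer (N : ℕ → Subgroup G) [∀ n, (N n).Normal]
    (hle : ∀ n, N (n + 1) ≤ N n) : Type _ :=
  {φ : odometerSubgroup N hle ≃ₜ odometerSubgroup N hle //
    ∀ (g : G) (x : odometerSubgroup N hle),
      φ (odIncl N hle g * x) = odIncl N hle g * φ x}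

-- auxiliary
instance quotBotDiscrete (H : Subgroup G) : DiscreteTopology (G ⧸ H) := ⟨rfl⟩

instance quotBotTG (H : Subgroup G) : IsTopologicalGroup (G ⧸ H) where
  continuous_mul := continuous_of_discreteTopology
  continuous_inv := continuous_of_discreteTopology

lemma od_agree_down (N : ℕ → Subgroup G) [∀ n, (N n).Normal]
    (hle : ∀ n, N (n + 1) ≤ N n) (x y : odometerSubgroup N hle) :
    ∀ m i, i ≤ m → x.1 m = y.1 m → x.1 i = y.1 i := by
  intro m
  induction m with
  | zero => intro i hi h; rw [Nat.le_zero.1 hi]; exact h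
  | succ m ih =>
    intro i hi h
    rcases Nat.lt_or_ge i (m + 1) with h' | h'
    · exact ih i (Nat.lt_succ_iff.1 h') (by rw [← x.2 m, ← y.2 m, h])
    · rw [le_antisymm hi h']; exact h

lemma od_dense (N : ℕ → Subgroup G) [∀ n, (N n).Normal]
    (hle : ∀ n, N (n + 1) ≤ N n) :
    Dense (Set.range (odIncl N hle)) := by
  intro x
  rw [mem_closure_iff]
  intro U hU hxU
  obtain ⟨V, hV, rfl⟩ := isOpen_induced_iff.1 hU
  obtain ⟨I, u, hIu, hsub⟩ := isOpen_pi_iff.1 hV x.1 hxU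
  set m := I.sup id with hm
  obtain ⟨g, hg⟩ := QuotientGroup.mk_surjective (x.1 m)
  refine ⟨odIncl N hle g, ?_, ⟨g, rfl⟩⟩
  show (odIncl N hle g).1 ∈ V
  apply hsub
  intro i hi
  have hi' : i ≤ m := Finset.le_sup (f := id) hi
  have : (odIncl N hle g).1 i = x.1 i :=
    od_agree_down N hle _ x m i hi' hg
  rw [this]
  exact (hIu i hi).2

lemma od_key (N : ℕ → Subgroup G) [∀ n, (N n).Normal]
    (hle : ∀ n, N (n + 1) ≤ N n) (φ : odometerCentralizer N hle)
    (x : odometerSubgroup N hle) : φ.1 x = x * φ.1 1 := by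
  have heq : (φ.1 : odometerSubgroup N hle → odometerSubgroup N hle)
      = fun y => y * φ.1 1 := by
    refine Continuous.ext_on (od_dense N hle) φ.1.continuous
      (continuous_id.mul continuous_const) ?_
    rintro _ ⟨g, rfl⟩
    have := φ.2 g 1
    simpa using this
  exact congrFun heq x

/-- For an abelian residually finite group `G`, the map
`ψ : C(Ḡ, G) → Ḡ`, `ψ(φ) = φ(e)`, is a group isomorphism from the centralizer of the
odometer onto `Ḡ`: it is bijective and multiplicative (where multiplication in the
centralizer is composition).  In particular, the centralizer is abelian. -/
theorem odometer_centralizer_iso (N : ℕ → Subgroup G) [∀ n, (N n).Normal]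
    (hle : ∀ n, N (n + 1) ≤ N n) (hfin : ∀ n, (N n).FiniteIndex)
    (hint : (⨅ n, N n) = ⊥) :
    Function.Bijective (fun φ : odometerCentralizer N hle => φ.1 1) ∧
    (∀ φ₁ φ₂ : odometerCentralizer N hle, φ₁.1 (φ₂.1 1) = φ₁.1 1 * φ₂.1 1) ∧
    (∀ φ₁ φ₂ : odometerCentralizer N hle, ∀ x, φ₁.1 (φ₂.1 x) = φ₂.1 (φ₁.1 x)) := by
  constructor
  · constructor
    · intro φ₁ φ₂ h
      apply Subtype.ext
      apply Homeomorph.ext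
      intro x
      rw [od_key N hle φ₁, od_key N hle φ₂]
      exact congrArg (x * ·) h
    · intro y
      refine ⟨⟨Homeomorph.mulRight y, fun g x => mul_assoc _ _ _⟩, ?_⟩
      simp [Homeomorph.mulRight]
  · constructor
    · intro φ₁ φ₂
      rw [od_key N hle φ₁, mul_comm]
    · intro φ₁ φ₂ x
      rw [od_key N hle φ₁ (φ₂.1 x), od_key N hle φ₂ x, od_key N hle φ₂ (φ₁.1 x),
        od_key N hle φ₁ x, mul_assoc, mul_assoc, mul_comm (φ₂.1 1)]
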